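/- arXiv:2504.10951 — 3 statements merged into one kernel-verified Lean document; each statement's English description precedes it below -/
import Mathlib

section
/- The particle velocity function (v_l, v_r) ↦ V(v_l, v_r) is locally Lipschitz on (0, ∞) × (0, ∞); moreover, the one-variable functions v_r ↦ V(0, v_r) and v_l ↦ V(v_l, 0) are locally Lipschitz on (0, ∞). -/
open MeasureTheory Set Filter
open scoped ENNReal NNReal Topology

/-- The velocity field `a(v) = f(v)/v`, extended by `a(0) = f'(0)`. -/
noncomputable def aF (f : ℝ → ℝ) (v : ℝ) : ℝ :=
  if v = 0 then deriv f 0 else f v / v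

/-- The particle velocity `V(v_l, v_r)`: the minimum of `a` over `[v_l, v_r]` if
`v_l ≤ v_r`, and the maximum of `a` over `[v_r, v_l]` if `v_r ≤ v_l`. -/
noncomputable def pV (f : ℝ → ℝ) (vl vr : ℝ) : ℝ :=
  if vl ≤ vr then sInf (aF f '' Set.Icc vl vr) else sSup (aF f '' Set.Icc vr vl)

/-- A solution of the particle system `ẋ^i = V(v^{i-1}, v^i)`,
`v^i_t = v₀^i Δx₀^i / Δx^i_t` on the time interval `[0, t')`, with the conventions
`v⁰ ≡ 0`, `v^N ≡ 0`. -/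
structure IsParticleSol (f : ℝ → ℝ) (N : ℕ) (x₀ v₀ : ℕ → ℝ) (t' : ℝ)
    (x v : ℕ → ℝ → ℝ) : Prop where
  init : ∀ i, 1 ≤ i → i ≤ N → x i 0 = x₀ i
  cont : ∀ i, 1 ≤ i → i ≤ N → ContinuousOn (x i) (Set.Ico 0 t')
  order : ∀ t ∈ Set.Ioo (0:ℝ) t', ∀ i, 1 ≤ i → i < N → x i t < x (i+1) t
  vzero : ∀ t, v 0 t = 0
  vN : ∀ t, v N t = 0
  ode : ∀ i, 1 ≤ i → i ≤ N → ∀ t ∈ Set.Ioo (0:ℝ) t',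
    HasDerivAt (x i) (pV f (v (i-1) t) (v i t)) t
  mass : ∀ i, 1 ≤ i → i < N → ∀ t ∈ Set.Ico (0:ℝ) t',
    v i t = v₀ i * (x₀ (i+1) - x₀ i) / (x (i+1) t - x i t)

section Aux
variable {f : ℝ → ℝ} {K : ℝ≥0}

lemma aF_abs_le (hf : LipschitzWith K f) (hf0 : f 0 = 0)
    (hfd : DifferentiableAt ℝ f 0) (v : ℝ) : |aF f v| ≤ K := by
  have hb : ∀ w : ℝ, w ≠ 0 → |f w / w| ≤ K := by
    intro w hw
    rw [abs_div, div_le_iff₀ (abs_pos.mpr hw)]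
    calc |f w| = dist (f w) (f 0) := by rw [hf0, Real.dist_eq, sub_zero]
      _ ≤ K * dist w 0 := hf.dist_le_mul w 0
      _ = K * |w| := by rw [Real.dist_eq, sub_zero]
  rcases eq_or_ne v 0 with rfl | hv
  · have ht : Tendsto (fun w => f w / w) (𝓝[≠] (0:ℝ)) (𝓝 (deriv f 0)) := by
      have h := hasDerivAt_iff_tendsto_slope.mp hfd.hasDerivAt
      refine h.congr' ?_
      filter_upwards [self_mem_nhdsWithin] with w hw
      simp [slope_def_field, hf0]
    have habs : Tendsto (fun w => |f w / w|) (𝓝[≠] (0:ℝ)) (𝓝 |deriv f 0|) :=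
      (continuous_abs.tendsto _).comp ht
    have hev : ∀ᶠ w in 𝓝[≠] (0:ℝ), |f w / w| ≤ (K:ℝ) :=
      eventually_nhdsWithin_of_forall (fun w hw => hb w hw)
    have := le_of_tendsto habs hev
    simpa [aF] using this
  · simpa [aF, hv] using hb v hv

lemma aF_lipOn (hf : LipschitzWith K f) (hf0 : f 0 = 0) {ε u w : ℝ}
    (hε : 0 < ε) (hu : ε ≤ u) (hw : ε ≤ w) :
    |aF f u - aF f w| ≤ 2 * K / ε * |u - w| := by
  have hu0 : (0:ℝ) < u := hε.trans_le hu
  have hw0 : (0:ℝ) < w := hε.trans_le hw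
  have hfw : |f w| ≤ K * w := by
    have := hf.dist_le_mul w 0
    rw [Real.dist_eq, Real.dist_eq, hf0, sub_zero, sub_zero, abs_of_pos hw0] at this
    exact this
  have hfuw : |f u - f w| ≤ K * |u - w| := by
    have := hf.dist_le_mul u w
    rwa [Real.dist_eq, Real.dist_eq] at this
  have h1 : aF f u - aF f w = ((f u - f w) * w + f w * (w - u)) / (u * w) := by
    simp only [aF, if_neg hu0.ne', if_neg hw0.ne']
    field_simp
    ring
  rw [h1, abs_div, abs_of_pos (mul_pos hu0 hw0), div_le_iff₀ (mul_pos hu0 hw0)]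
  have h2 : |(f u - f w) * w + f w * (w - u)| ≤ 2 * K * w * |u - w| := by
    calc |(f u - f w) * w + f w * (w - u)| ≤ |(f u - f w) * w| + |f w * (w - u)| :=
          abs_add_le _ _
      _ = |f u - f w| * w + |f w| * |u - w| := by
          rw [abs_mul, abs_mul, abs_of_pos hw0, abs_sub_comm w u]
      _ ≤ K * |u - w| * w + K * w * |u - w| := by
          have := mul_le_mul_of_nonneg_right hfw (abs_nonneg (u - w))
          have := mul_le_mul_of_nonneg_right hfuw hw0.le
          linarith
      _ = 2 * K * w * |u - w| := by ring
  refine h2.trans ?_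
  have key : 2 * (K:ℝ) / ε * |u - w| * (u * w) = (2 * K * w * |u - w|) * (u / ε) := by
    field_simp
  rw [key]
  exact le_mul_of_one_le_right (by positivity) ((one_le_div hε).mpr hu)

lemma inf_le_inf_add {g : ℝ → ℝ} {S T : Set ℝ} {C : ℝ}
    (hT : T.Nonempty) (hbS : BddBelow (g '' S))
    (h : ∀ v ∈ T, ∃ w ∈ S, g w ≤ g v + C) :
    sInf (g '' S) ≤ sInf (g '' T) + C := by
  rw [← sub_le_iff_le_add]
  refine le_csInf (hT.image g) ?_
  rintro y ⟨v, hv, rfl⟩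
  obtain ⟨w, hw, hgw⟩ := h v hv
  have := csInf_le hbS (mem_image_of_mem g hw)
  linarith

lemma sup_le_sup_add {g : ℝ → ℝ} {S T : Set ℝ} {C : ℝ}
    (hT : T.Nonempty) (hbS : BddAbove (g '' S))
    (h : ∀ v ∈ T, ∃ w ∈ S, g v ≤ g w + C) :
    sSup (g '' T) ≤ sSup (g '' S) + C := by
  refine csSup_le (hT.image g) ?_
  rintro y ⟨v, hv, rfl⟩
  obtain ⟨w, hw, hgw⟩ := h v hv
  have := le_csSup hbS (mem_image_of_mem g hw)
  linarith

lemma clamp_spec {vl vr vl' vr' v : ℝ} (h : vl ≤ vr) (hv : v ∈ Set.Icc vl' vr') :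
    max vl (min v vr) ∈ Set.Icc vl vr ∧
      |v - max vl (min v vr)| ≤ max |vl - vl'| |vr - vr'| := by
  obtain ⟨hv1, hv2⟩ := hv
  refine ⟨⟨le_max_left _ _, max_le h (min_le_of_right_le le_rfl)⟩, ?_⟩
  rcases le_or_gt v vl with hvl | hvl
  · have hmin : min v vr = v := min_eq_left (hvl.trans h)
    rw [hmin, max_eq_left hvl]
    have : |v - vl| ≤ |vl - vl'| := by
      rw [abs_sub_comm, abs_of_nonneg (by linarith)]
      have : vl - v ≤ vl - vl' := by linarith
      exact this.trans (le_abs_self _)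
    exact this.trans (le_max_left _ _)
  · rcases le_or_gt v vr with hvr | hvr
    · rw [min_eq_left hvr, max_eq_right hvl.le]
      simp [abs_nonneg]
    · rw [min_eq_right hvr.le, max_eq_right h]
      have : |v - vr| ≤ |vr - vr'| := by
        rw [abs_of_nonneg (by linarith), abs_sub_comm]
        have : v - vr ≤ vr' - vr := by linarith
        exact this.trans (le_abs_self _)
      exact this.trans (le_max_right _ _)

lemma aF_bddBelow (hf : LipschitzWith K f) (hf0 : f 0 = 0)
    (hfd : DifferentiableAt ℝ f 0) (S : Set ℝ) : BddBelow (aF f '' S) := by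
  refine ⟨-K, ?_⟩
  rintro y ⟨v, _, rfl⟩
  linarith [(abs_le.mp (aF_abs_le hf hf0 hfd v)).1]

lemma aF_bddAbove (hf : LipschitzWith K f) (hf0 : f 0 = 0)
    (hfd : DifferentiableAt ℝ f 0) (S : Set ℝ) : BddAbove (aF f '' S) := by
  refine ⟨K, ?_⟩
  rintro y ⟨v, _, rfl⟩
  exact (abs_le.mp (aF_abs_le hf hf0 hfd v)).2

lemma pV_min_est (hf : LipschitzWith K f) (hf0 : f 0 = 0) (hfd : DifferentiableAt ℝ f 0)
    {ε vl vr vl' vr' : ℝ} (hε : 0 < ε) (hl : ε ≤ vl) (hl' : ε ≤ vl')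
    (h : vl ≤ vr) (h' : vl' ≤ vr') :
    |sInf (aF f '' Set.Icc vl vr) - sInf (aF f '' Set.Icc vl' vr')| ≤
      2 * K / ε * max |vl - vl'| |vr - vr'| := by
  set L : ℝ := 2 * K / ε with hLdef
  set M : ℝ := max |vl - vl'| |vr - vr'| with hMdef
  have hL0 : 0 ≤ L := by positivity
  have hM0 : 0 ≤ M := le_trans (abs_nonneg _) (le_max_left _ _)
  have key : ∀ a b a' b' : ℝ, ε ≤ a → ε ≤ a' → a ≤ b → a' ≤ b' →
      max |a - a'| |b - b'| ≤ M →
      sInf (aF f '' Set.Icc a b) ≤ sInf (aF f '' Set.Icc a' b') + L * M := by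
    intro a b a' b' ha ha' hab ha'b' hMle
    refine inf_le_inf_add (Set.nonempty_Icc.mpr ha'b') (aF_bddBelow hf hf0 hfd _) ?_
    intro v hv
    obtain ⟨hwmem, hwd⟩ := clamp_spec hab hv
    refine ⟨max a (min v b), hwmem, ?_⟩
    have hvε : ε ≤ v := ha'.trans hv.1
    have hwε : ε ≤ max a (min v b) := ha.trans (le_max_left _ _)
    have hlip := aF_lipOn hf hf0 hε hwε hvε
    have h1 : |max a (min v b) - v| ≤ M := by
      rw [abs_sub_comm]; exact hwd.trans hMle
    have h2 : L * |max a (min v b) - v| ≤ L * M := mul_le_mul_of_nonneg_left h1 hL0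
    have := (abs_le.mp hlip).2
    linarith
  rw [abs_sub_le_iff]
  constructor
  · have := key vl vr vl' vr' hl hl' h h' le_rfl
    linarith
  · have hMs : max |vl' - vl| |vr' - vr| ≤ M := by
      rw [abs_sub_comm vl' vl, abs_sub_comm vr' vr]
    have := key vl' vr' vl vr hl' hl h' h hMs
    linarith

lemma pV_max_est (hf : LipschitzWith K f) (hf0 : f 0 = 0) (hfd : DifferentiableAt ℝ f 0)
    {ε vl vr vl' vr' : ℝ} (hε : 0 < ε) (hr : ε ≤ vr) (hr' : ε ≤ vr')
    (h : vr ≤ vl) (h' : vr' ≤ vl') :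
    |sSup (aF f '' Set.Icc vr vl) - sSup (aF f '' Set.Icc vr' vl')| ≤
      2 * K / ε * max |vl - vl'| |vr - vr'| := by
  set L : ℝ := 2 * K / ε with hLdef
  set M : ℝ := max |vl - vl'| |vr - vr'| with hMdef
  have hL0 : 0 ≤ L := by positivity
  have key : ∀ a b a' b' : ℝ, ε ≤ a → ε ≤ a' → a ≤ b → a' ≤ b' →
      max |a - a'| |b - b'| ≤ M →
      sSup (aF f '' Set.Icc a' b') ≤ sSup (aF f '' Set.Icc a b) + L * M := by
    intro a b a' b' ha ha' hab ha'b' hMle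
    refine sup_le_sup_add (Set.nonempty_Icc.mpr ha'b') (aF_bddAbove hf hf0 hfd _) ?_
    intro v hv
    obtain ⟨hwmem, hwd⟩ := clamp_spec hab hv
    refine ⟨max a (min v b), hwmem, ?_⟩
    have hvε : ε ≤ v := ha'.trans hv.1
    have hwε : ε ≤ max a (min v b) := ha.trans (le_max_left _ _)
    have hlip := aF_lipOn hf hf0 hε hvε hwε
    have h2 : L * |v - max a (min v b)| ≤ L * M :=
      mul_le_mul_of_nonneg_left (hwd.trans hMle) hL0
    have := (abs_le.mp hlip).2
    linarith
  rw [abs_sub_le_iff]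
  constructor
  · have hMs : max |vr - vr'| |vl - vl'| ≤ M := by rw [max_comm]
    have := key vr' vl' vr vl hr' hr h' h (by rw [abs_sub_comm vr' vr, abs_sub_comm vl' vl, max_comm])
    linarith
  · have := key vr vl vr' vl' hr hr' h h' (by rw [max_comm])
    linarith

lemma pV_mixed_est (hf : LipschitzWith K f) (hf0 : f 0 = 0) (hfd : DifferentiableAt ℝ f 0)
    {ε vl vr vl' vr' : ℝ} (hε : 0 < ε) (h1 : ε ≤ vl) (h2 : ε ≤ vr)
    (h3 : ε ≤ vl') (h4 : ε ≤ vr') (hc : vl ≤ vr) (hc' : vr' < vl') :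
    |pV f vl vr - pV f vl' vr'| ≤ 2 * K / ε * max |vl - vl'| |vr - vr'| := by
  set L : ℝ := 2 * K / ε with hLdef
  set M : ℝ := max |vl - vl'| |vr - vr'| with hMdef
  have hL0 : 0 ≤ L := by positivity
  have hD0 : (0:ℝ) < (vr - vl) + (vl' - vr') := by linarith
  set t : ℝ := (vr - vl) / ((vr - vl) + (vl' - vr')) with ht
  have htD : t * ((vr - vl) + (vl' - vr')) = vr - vl := div_mul_cancel₀ _ hD0.ne'
  have ht0 : 0 ≤ t := div_nonneg (by linarith) hD0.le
  have ht1 : t ≤ 1 := by rw [ht, div_le_one hD0]; linarith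
  set c : ℝ := vl + t * (vl' - vl) with hcdef
  have hc2 : c = vr + t * (vr' - vr) := by rw [hcdef]; linear_combination htD
  have hcε : ε ≤ c := by
    nlinarith [mul_nonneg (sub_nonneg.mpr ht1) (sub_nonneg.mpr h1),
      mul_nonneg ht0 (sub_nonneg.mpr h3)]
  have hsing : aF f '' Set.Icc c c = {aF f c} := by rw [Set.Icc_self, Set.image_singleton]
  have e1 : |sInf (aF f '' Set.Icc vl vr) - aF f c| ≤ L * max |vl - c| |vr - c| := by
    have := pV_min_est hf hf0 hfd hε h1 hcε hc (le_refl c)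
    rwa [hsing, csInf_singleton] at this
  have e2 : |aF f c - sSup (aF f '' Set.Icc vr' vl')| ≤ L * max |c - vl'| |c - vr'| := by
    have := pV_max_est hf hf0 hfd hε hcε h4 (le_refl c) hc'.le
    rwa [hsing, csSup_singleton] at this
  have hb1 : max |vl - c| |vr - c| ≤ t * M := by
    have e3 : |vl - c| = t * |vl - vl'| := by
      rw [hcdef]
      rw [show vl - (vl + t * (vl' - vl)) = t * (vl - vl') by ring, abs_mul,
        abs_of_nonneg ht0]
    have e4 : |vr - c| = t * |vr - vr'| := by
      rw [hc2, show vr - (vr + t * (vr' - vr)) = t * (vr - vr') by ring, abs_mul,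
        abs_of_nonneg ht0]
    rw [e3, e4]
    exact max_le (mul_le_mul_of_nonneg_left (le_max_left _ _) ht0)
      (mul_le_mul_of_nonneg_left (le_max_right _ _) ht0)
  have hb2 : max |c - vl'| |c - vr'| ≤ (1 - t) * M := by
    have ht1' : 0 ≤ 1 - t := by linarith
    have e3 : |c - vl'| = (1 - t) * |vl - vl'| := by
      rw [hcdef, show vl + t * (vl' - vl) - vl' = (1 - t) * (vl - vl') by ring, abs_mul,
        abs_of_nonneg ht1']
    have e4 : |c - vr'| = (1 - t) * |vr - vr'| := by
      rw [hc2, show vr + t * (vr' - vr) - vr' = (1 - t) * (vr - vr') by ring, abs_mul,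
        abs_of_nonneg ht1']
    rw [e3, e4]
    exact max_le (mul_le_mul_of_nonneg_left (le_max_left _ _) ht1')
      (mul_le_mul_of_nonneg_left (le_max_right _ _) ht1')
  have hpv1 : pV f vl vr = sInf (aF f '' Set.Icc vl vr) := if_pos hc
  have hpv2 : pV f vl' vr' = sSup (aF f '' Set.Icc vr' vl') := if_neg (not_le.mpr hc')
  rw [hpv1, hpv2]
  have tri := abs_sub_le (sInf (aF f '' Set.Icc vl vr)) (aF f c)
    (sSup (aF f '' Set.Icc vr' vl'))
  have m1 : L * max |vl - c| |vr - c| ≤ L * (t * M) := mul_le_mul_of_nonneg_left hb1 hL0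
  have m2 : L * max |c - vl'| |c - vr'| ≤ L * ((1 - t) * M) := mul_le_mul_of_nonneg_left hb2 hL0
  have : L * (t * M) + L * ((1 - t) * M) = L * M := by ring
  linarith

lemma pV_est (hf : LipschitzWith K f) (hf0 : f 0 = 0) (hfd : DifferentiableAt ℝ f 0)
    {ε : ℝ} (hε : 0 < ε) (vl vr vl' vr' : ℝ)
    (h1 : ε ≤ vl) (h2 : ε ≤ vr) (h3 : ε ≤ vl') (h4 : ε ≤ vr') :
    |pV f vl vr - pV f vl' vr'| ≤ 2 * K / ε * max |vl - vl'| |vr - vr'| := by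
  rcases le_or_gt vl vr with hc | hc <;> rcases le_or_gt vl' vr' with hc' | hc'
  · rw [pV, if_pos hc, pV, if_pos hc']
    exact pV_min_est hf hf0 hfd hε h1 h3 hc hc'
  · exact pV_mixed_est hf hf0 hfd hε h1 h2 h3 h4 hc hc'
  · rw [abs_sub_comm, show max |vl - vl'| |vr - vr'| = max |vl' - vl| |vr' - vr| by
      rw [abs_sub_comm vl vl', abs_sub_comm vr vr']]
    exact pV_mixed_est hf hf0 hfd hε h3 h4 h1 h2 hc' hc
  · rw [pV, if_neg (not_le.mpr hc), pV, if_neg (not_le.mpr hc')]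
    exact pV_max_est hf hf0 hfd hε h2 h4 hc.le hc'.le

lemma pV_split_left (hf : LipschitzWith K f) (hf0 : f 0 = 0) (hfd : DifferentiableAt ℝ f 0)
    {ε r : ℝ} (hε : 0 < ε) (hr : ε ≤ r) :
    pV f 0 r = min (sInf (aF f '' Set.Icc 0 ε)) (sInf (aF f '' Set.Icc ε r)) := by
  rw [pV, if_pos (hε.le.trans hr), ← Set.Icc_union_Icc_eq_Icc hε.le hr, Set.image_union,
    csInf_union (aF_bddBelow hf hf0 hfd _) ((Set.nonempty_Icc.mpr hε.le).image _)
      (aF_bddBelow hf hf0 hfd _) ((Set.nonempty_Icc.mpr hr).image _)]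

lemma pV_split_right (hf : LipschitzWith K f) (hf0 : f 0 = 0) (hfd : DifferentiableAt ℝ f 0)
    {ε l : ℝ} (hε : 0 < ε) (hl : ε ≤ l) :
    pV f l 0 = max (sSup (aF f '' Set.Icc 0 ε)) (sSup (aF f '' Set.Icc ε l)) := by
  have h0l : 0 < l := hε.trans_le hl
  rw [pV, if_neg (not_le.mpr h0l), ← Set.Icc_union_Icc_eq_Icc hε.le hl, Set.image_union,
    csSup_union (aF_bddAbove hf hf0 hfd _) ((Set.nonempty_Icc.mpr hε.le).image _)
      (aF_bddAbove hf hf0 hfd _) ((Set.nonempty_Icc.mpr hl).image _)]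

lemma pV0_est (hf : LipschitzWith K f) (hf0 : f 0 = 0) (hfd : DifferentiableAt ℝ f 0)
    {ε r r' : ℝ} (hε : 0 < ε) (hr : ε ≤ r) (hr' : ε ≤ r') :
    |pV f 0 r - pV f 0 r'| ≤ 2 * K / ε * |r - r'| := by
  rw [pV_split_left hf hf0 hfd hε hr, pV_split_left hf hf0 hfd hε hr']
  refine (abs_min_sub_min_le_max _ _ _ _).trans ?_
  rw [sub_self, abs_zero, max_eq_right (abs_nonneg _)]
  have := pV_min_est hf hf0 hfd hε (le_refl ε) (le_refl ε) hr hr'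
  rwa [sub_self, abs_zero, max_eq_right (abs_nonneg _)] at this

lemma pV0_est' (hf : LipschitzWith K f) (hf0 : f 0 = 0) (hfd : DifferentiableAt ℝ f 0)
    {ε l l' : ℝ} (hε : 0 < ε) (hl : ε ≤ l) (hl' : ε ≤ l') :
    |pV f l 0 - pV f l' 0| ≤ 2 * K / ε * |l - l'| := by
  rw [pV_split_right hf hf0 hfd hε hl, pV_split_right hf hf0 hfd hε hl']
  refine (abs_max_sub_max_le_max _ _ _ _).trans ?_
  rw [sub_self, abs_zero, max_eq_right (abs_nonneg _)]
  have := pV_max_est hf hf0 hfd hε (le_refl ε) (le_refl ε) hl hl'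
  rwa [sub_self, abs_zero, max_eq_left (abs_nonneg _)] at this
end Aux

/-- The particle velocity function `(v_l, v_r) ↦ V(v_l, v_r)` is locally
Lipschitz on `(0, ∞) × (0, ∞)`; moreover `v_r ↦ V(0, v_r)` and `v_l ↦ V(v_l, 0)` are
locally Lipschitz on `(0, ∞)`. -/
theorem velocity_locally_lipschitz (f : ℝ → ℝ) (K : ℝ≥0) (hf : LipschitzWith K f)
    (hf0 : f 0 = 0) (hfd : DifferentiableAt ℝ f 0) :
    (∀ p ∈ (Set.Ioi (0:ℝ)) ×ˢ (Set.Ioi (0:ℝ)), ∃ K' : ℝ≥0,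
      ∃ s ∈ nhdsWithin p ((Set.Ioi (0:ℝ)) ×ˢ (Set.Ioi (0:ℝ))),
        LipschitzOnWith K' (fun q : ℝ × ℝ => pV f q.1 q.2) s) ∧
    (∀ r ∈ Set.Ioi (0:ℝ), ∃ K' : ℝ≥0, ∃ s ∈ nhdsWithin r (Set.Ioi (0:ℝ)),
        LipschitzOnWith K' (fun vr : ℝ => pV f 0 vr) s) ∧
    (∀ l ∈ Set.Ioi (0:ℝ), ∃ K' : ℝ≥0, ∃ s ∈ nhdsWithin l (Set.Ioi (0:ℝ)),
        LipschitzOnWith K' (fun vl : ℝ => pV f vl 0) s) := by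
  refine ⟨?_, ?_, ?_⟩
  · rintro ⟨l, r⟩ ⟨hl, hr⟩
    simp only [Set.mem_Ioi] at hl hr
    set ε : ℝ := min l r / 2 with hεdef
    have hε : 0 < ε := by positivity
    refine ⟨(2 * K / ε).toNNReal, Set.Ioi (l/2) ×ˢ Set.Ioi (r/2), ?_, ?_⟩
    · exact mem_nhdsWithin_of_mem_nhds ((isOpen_Ioi.prod isOpen_Ioi).mem_nhds
        ⟨half_lt_self hl, half_lt_self hr⟩)
    · rw [lipschitzOnWith_iff_dist_le_mul]
      rintro ⟨x1, x2⟩ ⟨hx1, hx2⟩ ⟨y1, y2⟩ ⟨hy1, hy2⟩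
      simp only [Set.mem_Ioi] at hx1 hx2 hy1 hy2
      have hεl : ε ≤ l / 2 := by
        rw [hεdef]; exact div_le_div_of_nonneg_right (min_le_left _ _) (by norm_num : (0:ℝ) ≤ 2)
      have hεr : ε ≤ r / 2 := by
        rw [hεdef]; exact div_le_div_of_nonneg_right (min_le_right _ _) (by norm_num : (0:ℝ) ≤ 2)
      have := pV_est hf hf0 hfd hε x1 x2 y1 y2 (hεl.trans hx1.le) (hεr.trans hx2.le)
        (hεl.trans hy1.le) (hεr.trans hy2.le)
      rw [Real.coe_toNNReal _ (by positivity), Prod.dist_eq, Real.dist_eq,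
        Real.dist_eq, Real.dist_eq]
      exact this
  · intro r hr
    simp only [Set.mem_Ioi] at hr
    have hε : 0 < r / 2 := by positivity
    refine ⟨(2 * K / (r/2)).toNNReal, Set.Ioi (r/2), ?_, ?_⟩
    · exact mem_nhdsWithin_of_mem_nhds (isOpen_Ioi.mem_nhds (half_lt_self hr))
    · rw [lipschitzOnWith_iff_dist_le_mul]
      intro x hx y hy
      simp only [Set.mem_Ioi] at hx hy
      rw [Real.coe_toNNReal _ (by positivity), Real.dist_eq, Real.dist_eq]
      exact pV0_est hf hf0 hfd hε hx.le hy.le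
  · intro l hl
    simp only [Set.mem_Ioi] at hl
    have hε : 0 < l / 2 := by positivity
    refine ⟨(2 * K / (l/2)).toNNReal, Set.Ioi (l/2), ?_, ?_⟩
    · exact mem_nhdsWithin_of_mem_nhds (isOpen_Ioi.mem_nhds (half_lt_self hl))
    · rw [lipschitzOnWith_iff_dist_le_mul]
      intro x hx y hy
      simp only [Set.mem_Ioi] at hx hy
      rw [Real.coe_toNNReal _ (by positivity), Real.dist_eq, Real.dist_eq]
      exact pV0_est' hf hf0 hfd hε hx.le hy.le
end

section
/- (Maximum principle.) Let (x^i)_{i=1}^N, (v^i)_{i=1}^{N−1} be a solution of the particle system on (0, t'). Then for every t ∈ (0, t') and every i ∈ {1, …, N−1}: v₀^i Δx₀^i / (Δx₀^i + t (a_max − a_min)) ≤ v^i_t ≤ v₀*, where Δx₀^i := x₀^{i+1} − x₀^i. -/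
open MeasureTheory Set Filter
open scoped ENNReal NNReal
open scoped Topology

/-- `v₀* = max_{1 ≤ i ≤ N-1} v₀^i`. -/
noncomputable def vstar (N : ℕ) (v₀ : ℕ → ℝ) : ℝ :=
  sSup {r | ∃ i, 1 ≤ i ∧ i ≤ N - 1 ∧ r = v₀ i}

/-- `a_min = min_{v ∈ [0, v₀*]} a(v)`. -/
noncomputable def aMin (f : ℝ → ℝ) (N : ℕ) (v₀ : ℕ → ℝ) : ℝ :=
  sInf (aF f '' Set.Icc 0 (vstar N v₀))

/-- `a_max = max_{v ∈ [0, v₀*]} a(v)`. -/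
noncomputable def aMax (f : ℝ → ℝ) (N : ℕ) (v₀ : ℕ → ℝ) : ℝ :=
  sSup (aF f '' Set.Icc 0 (vstar N v₀))

lemma aF_cont {f : ℝ → ℝ} (hf : Continuous f) (hf0 : f 0 = 0)
    (hfd : DifferentiableAt ℝ f 0) : Continuous (aF f) := by
  rw [continuous_iff_continuousAt]
  intro x
  rcases eq_or_ne x 0 with rfl | hx
  · rw [← continuousWithinAt_compl_self]
    have h := hfd.hasDerivAt
    rw [hasDerivAt_iff_tendsto_slope] at h
    have h2 : Tendsto (aF f) (𝓝[≠] (0:ℝ)) (𝓝 (deriv f 0)) := by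
      refine h.congr' ?_
      filter_upwards [self_mem_nhdsWithin] with y hy
      simp only [Set.mem_compl_iff, Set.mem_singleton_iff] at hy
      simp [slope_def_field, aF, hy, hf0]
    simpa [ContinuousWithinAt, aF] using h2
  · have h1 : ContinuousAt (fun w => f w / w) x := (hf.continuousAt).div continuousAt_id hx
    refine h1.congr ?_
    filter_upwards [isOpen_compl_singleton.mem_nhds hx] with y hy
    simp only [Set.mem_compl_iff, Set.mem_singleton_iff] at hy
    simp [aF, hy]

lemma pV_le_aF {f : ℝ → ℝ} (hc : Continuous (aF f)) {vl vr : ℝ} (h : vl ≤ vr) :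
    pV f vl vr ≤ aF f vr := by
  rw [pV, if_pos h]
  exact csInf_le (isCompact_Icc.image hc).bddBelow ⟨vr, Set.right_mem_Icc.2 h, rfl⟩

lemma aF_le_pV {f : ℝ → ℝ} (hc : Continuous (aF f)) {vl vr : ℝ} (h : vr ≤ vl) :
    aF f vl ≤ pV f vl vr := by
  rw [pV]
  split_ifs with h'
  · have hh : vl = vr := le_antisymm h' h
    subst hh
    simp [Set.Icc_self]
  · exact le_csSup (isCompact_Icc.image hc).bddAbove ⟨vl, Set.right_mem_Icc.2 h, rfl⟩

lemma pV_mem {f : ℝ → ℝ} (hc : Continuous (aF f)) {M vl vr : ℝ}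
    (hl : vl ∈ Set.Icc 0 M) (hr : vr ∈ Set.Icc 0 M) :
    pV f vl vr ∈ Set.Icc (sInf (aF f '' Set.Icc 0 M)) (sSup (aF f '' Set.Icc 0 M)) := by
  have hbb : BddBelow (aF f '' Set.Icc 0 M) := (isCompact_Icc.image hc).bddBelow
  have hba : BddAbove (aF f '' Set.Icc 0 M) := (isCompact_Icc.image hc).bddAbove
  rw [pV]
  split_ifs with h
  · have hsub : aF f '' Set.Icc vl vr ⊆ aF f '' Set.Icc 0 M :=
      Set.image_mono (Set.Icc_subset_Icc hl.1 hr.2)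
    have hne : (aF f '' Set.Icc vl vr).Nonempty := ⟨aF f vl, ⟨vl, Set.left_mem_Icc.2 h, rfl⟩⟩
    refine ⟨csInf_le_csInf hbb hne hsub, ?_⟩
    exact le_trans (csInf_le (hbb.mono hsub) ⟨vl, Set.left_mem_Icc.2 h, rfl⟩)
      (le_csSup hba ⟨vl, hl, rfl⟩)
  · push_neg at h
    have h := h.le
    have hsub : aF f '' Set.Icc vr vl ⊆ aF f '' Set.Icc 0 M :=
      Set.image_mono (Set.Icc_subset_Icc hr.1 hl.2)
    have hmem : aF f vr ∈ aF f '' Set.Icc vr vl := ⟨vr, Set.left_mem_Icc.2 h, rfl⟩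
    refine ⟨le_trans (csInf_le hbb ⟨vr, hr, rfl⟩) (le_csSup (hba.mono hsub) hmem), ?_⟩
    exact csSup_le_csSup hba ⟨_, hmem⟩ hsub

/-- **Maximum principle.** For a solution of the particle system on `(0, t')`,
`v₀^i Δx₀^i / (Δx₀^i + t (a_max − a_min)) ≤ v^i_t ≤ v₀*` for all `t ∈ (0, t')` and
`i ∈ {1, …, N−1}`. -/
theorem maximum_principle (f : ℝ → ℝ) (K : ℝ≥0) (hf : LipschitzWith K f)
    (hf0 : f 0 = 0) (hfd : DifferentiableAt ℝ f 0)
    (N : ℕ) (hN : 2 ≤ N) (x₀ v₀ : ℕ → ℝ)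
    (hx₀ : ∀ i, 1 ≤ i → i < N → x₀ i < x₀ (i+1))
    (hv₀nn : ∀ i, 1 ≤ i → i < N → 0 ≤ v₀ i)
    (hv₀0 : v₀ 0 = 0) (hv₀N : v₀ N = 0)
    (t' : ℝ) (ht' : 0 < t') (x v : ℕ → ℝ → ℝ)
    (hsol : IsParticleSol f N x₀ v₀ t' x v) :
    ∀ t ∈ Set.Ioo (0:ℝ) t', ∀ i, 1 ≤ i → i < N →
      v₀ i * (x₀ (i+1) - x₀ i) / ((x₀ (i+1) - x₀ i) + t * (aMax f N v₀ - aMin f N v₀))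
        ≤ v i t ∧ v i t ≤ vstar N v₀ := by
  have hcont : Continuous (aF f) := aF_cont hf.continuous hf0 hfd
  have hbddS : BddAbove {r | ∃ i, 1 ≤ i ∧ i ≤ N - 1 ∧ r = v₀ i} := by
    have hset : {r | ∃ i, 1 ≤ i ∧ i ≤ N - 1 ∧ r = v₀ i} = v₀ '' Set.Icc 1 (N-1) := by
      ext r
      constructor
      · rintro ⟨i, h1, h2, rfl⟩; exact ⟨i, ⟨h1, h2⟩, rfl⟩
      · rintro ⟨i, ⟨h1, h2⟩, rfl⟩; exact ⟨i, h1, h2, rfl⟩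
    rw [hset]
    exact ((Set.finite_Icc _ _).image _).bddAbove
  have hvle : ∀ i, 1 ≤ i → i < N → v₀ i ≤ vstar N v₀ := fun i h1 h2 =>
    le_csSup hbddS ⟨i, h1, by omega, rfl⟩
  have hWnn : 0 ≤ vstar N v₀ := le_trans (hv₀nn 1 le_rfl (by omega)) (hvle 1 le_rfl (by omega))
  set W := vstar N v₀ with hWdef
  have hΔ0 : ∀ j, 1 ≤ j → j < N → (0:ℝ) < x₀ (j+1) - x₀ j := fun j h1 h2 => sub_pos.2 (hx₀ j h1 h2)
  have hΔIco : ∀ j, 1 ≤ j → j < N → ∀ s ∈ Set.Ico (0:ℝ) t', 0 < x (j+1) s - x j s := by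
    intro j h1 h2 s hs
    rcases eq_or_lt_of_le hs.1 with h | h
    · rw [← h, hsol.init (j+1) (by omega) (by omega), hsol.init j h1 (by omega)]
      exact hΔ0 j h1 h2
    · exact sub_pos.2 (hsol.order s ⟨h, hs.2⟩ j h1 h2)
  have hvnn : ∀ j, 1 ≤ j → j < N → ∀ s ∈ Set.Ico (0:ℝ) t', 0 ≤ v j s := by
    intro j h1 h2 s hs
    rw [hsol.mass j h1 h2 s hs]
    exact div_nonneg (mul_nonneg (hv₀nn j h1 h2) (hΔ0 j h1 h2).le) (hΔIco j h1 h2 s hs).le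
  have hv0 : ∀ j, 1 ≤ j → j < N → v j 0 = v₀ j := by
    intro j h1 h2
    rw [hsol.mass j h1 h2 0 ⟨le_refl 0, ht'⟩, hsol.init (j+1) (by omega) (by omega),
      hsol.init j h1 (by omega), mul_div_assoc, div_self (hΔ0 j h1 h2).ne', mul_one]
  have hvcont : ∀ j, 1 ≤ j → j < N → ContinuousOn (v j) (Set.Ico 0 t') := by
    intro j h1 h2
    have hden := (hsol.cont (j+1) (by omega) (by omega)).sub (hsol.cont j h1 (by omega))
    have hq := (continuousOn_const (c := v₀ j * (x₀ (j+1) - x₀ j))).div hden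
      (fun s hs => (hΔIco j h1 h2 s hs).ne')
    exact hq.congr (fun s hs => hsol.mass j h1 h2 s hs)
  -- Part 1: upper bound via barrier argument
  have key : ∀ ε : ℝ, 0 < ε → ∀ t ∈ Set.Ioo (0:ℝ) t', ∀ i, 1 ≤ i → i < N →
      v i t ≤ (W + ε) * Real.exp (ε * t) := by
    intro ε hε
    by_contra hcon
    push_neg at hcon
    obtain ⟨t₀, ht₀, i₀, hi₀1, hi₀N, hgt⟩ := hcon
    set b : ℝ → ℝ := fun s => (W + ε) * Real.exp (ε * s) with hbdef
    have hbpos : ∀ s : ℝ, 0 < b s := fun s => mul_pos (by linarith) (Real.exp_pos _)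
    have hbcont : Continuous b := by fun_prop
    have hsub' : Set.Icc (0:ℝ) t₀ ⊆ Set.Ico 0 t' := fun u hu => ⟨hu.1, lt_of_le_of_lt hu.2 ht₀.2⟩
    set S : Set ℝ := ⋃ j ∈ Finset.Icc 1 (N-1), {u | u ∈ Set.Icc (0:ℝ) t₀ ∧ b u ≤ v j u}
      with hSdef
    have hmemS : ∀ u ∈ Set.Icc (0:ℝ) t₀, ∀ j, 1 ≤ j → j < N → b u ≤ v j u → u ∈ S := by
      intro u hu j h1 h2 hle
      exact Set.mem_biUnion (Finset.mem_Icc.2 ⟨h1, by omega⟩) ⟨hu, hle⟩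
    have hclosed : IsClosed S := by
      apply isClosed_biUnion_finset
      intro j hj
      rw [Finset.mem_Icc] at hj
      have hcj : ContinuousOn (fun u => v j u - b u) (Set.Icc 0 t₀) :=
        ((hvcont j hj.1 (by omega)).mono hsub').sub hbcont.continuousOn
      have hset : {u | u ∈ Set.Icc (0:ℝ) t₀ ∧ b u ≤ v j u}
          = Set.Icc (0:ℝ) t₀ ∩ (fun u => v j u - b u) ⁻¹' Set.Ici 0 := by
        ext u
        simp only [Set.mem_setOf_eq, Set.mem_inter_iff, Set.mem_preimage, Set.mem_Ici, sub_nonneg]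
      rw [hset]
      exact hcj.preimage_isClosed_of_isClosed isClosed_Icc isClosed_Ici
    have hSne : S.Nonempty := ⟨t₀, hmemS t₀ ⟨ht₀.1.le, le_refl _⟩ i₀ hi₀1 hi₀N hgt.le⟩
    have hSbdd : BddBelow S := by
      refine ⟨0, fun u hu => ?_⟩
      simp only [hSdef, Set.mem_iUnion, Set.mem_setOf_eq, exists_prop] at hu
      obtain ⟨j, _, hu2, _⟩ := hu
      exact hu2.1
    set τ := sInf S with hτdef
    have hτS : τ ∈ S := hclosed.csInf_mem hSne hSbdd
    simp only [hSdef, Set.mem_iUnion, Finset.mem_Icc, Set.mem_setOf_eq, exists_prop] at hτS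
    obtain ⟨i, ⟨hi1, hi2⟩, hτIcc, hcross⟩ := hτS
    have hiN : i < N := by omega
    have hτ0 : 0 < τ := by
      rcases eq_or_lt_of_le hτIcc.1 with h | h
      · exfalso
        rw [← h, hv0 i hi1 hiN] at hcross
        have hb0 : b 0 = W + ε := by simp [hbdef]
        rw [hb0] at hcross
        have := hvle i hi1 hiN
        linarith
      · exact h
    have hτmem : τ ∈ Set.Ioo (0:ℝ) t' := ⟨hτ0, lt_of_le_of_lt hτIcc.2 ht₀.2⟩
    have hpre : ∀ s, 0 ≤ s → s < τ → ∀ j, 1 ≤ j → j < N → v j s < b s := by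
      intro s hs0 hsτ j h1 h2
      by_contra hh
      push_neg at hh
      have hmem : s ∈ S := hmemS s ⟨hs0, le_trans hsτ.le hτIcc.2⟩ j h1 h2 hh
      exact absurd (csInf_le hSbdd hmem) (not_le.2 hsτ)
    have hle : ∀ j, 1 ≤ j → j < N → v j τ ≤ b τ := by
      intro j h1 h2
      have hcj : ContinuousOn (fun u => v j u - b u) (Set.Icc 0 τ) :=
        ((hvcont j h1 h2).mono (fun u hu => ⟨hu.1, lt_of_le_of_lt hu.2 hτmem.2⟩)).sub
          hbcont.continuousOn
      have hneBot : (𝓝[Set.Ico (0:ℝ) τ] τ).NeBot := by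
        refine mem_closure_iff_nhdsWithin_neBot.1 ?_
        rw [closure_Ico hτ0.ne]
        exact Set.right_mem_Icc.2 hτ0.le
      have htd : Tendsto (fun u => v j u - b u) (𝓝[Set.Ico (0:ℝ) τ] τ) (𝓝 (v j τ - b τ)) :=
        (hcj.continuousWithinAt (Set.right_mem_Icc.2 hτ0.le)).mono_left
          (nhdsWithin_mono τ Set.Ico_subset_Icc_self)
      have hev : ∀ᶠ u in 𝓝[Set.Ico (0:ℝ) τ] τ, v j u - b u ≤ 0 := by
        filter_upwards [self_mem_nhdsWithin] with u hu
        exact sub_nonpos.2 (hpre u hu.1 hu.2 j h1 h2).le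
      have := le_of_tendsto htd hev
      linarith
    have hveq : v i τ = b τ := le_antisymm (hle i hi1 hiN) hcross
    have hnbl : v (i-1) τ ≤ v i τ := by
      by_cases h : i = 1
      · have hz : v (i-1) τ = 0 := by rw [h]; exact hsol.vzero τ
        rw [hz, hveq]; exact (hbpos τ).le
      · rw [hveq]; exact hle (i-1) (by omega) (by omega)
    have hnbr : v (i+1) τ ≤ v i τ := by
      by_cases h : i + 1 = N
      · have hz : v (i+1) τ = 0 := by rw [h]; exact hsol.vN τ
        rw [hz, hveq]; exact (hbpos τ).le
      · rw [hveq]; exact hle (i+1) (by omega) (by omega)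
    have hode1 : HasDerivAt (x (i+1)) (pV f (v i τ) (v (i+1) τ)) τ := by
      simpa using hsol.ode (i+1) (by omega) (by omega) τ hτmem
    have hode0 : HasDerivAt (x i) (pV f (v (i-1) τ) (v i τ)) τ :=
      hsol.ode i hi1 (by omega) τ hτmem
    set D1 := pV f (v i τ) (v (i+1) τ) with hD1
    set D0 := pV f (v (i-1) τ) (v i τ) with hD0
    have hΔd : HasDerivAt (fun s => x (i+1) s - x i s) (D1 - D0) τ := hode1.sub hode0
    have hΔτ : 0 < x (i+1) τ - x i τ := hΔIco i hi1 hiN τ ⟨hτ0.le, hτmem.2⟩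
    set c := v₀ i * (x₀ (i+1) - x₀ i) with hcdef
    have hcnn : 0 ≤ c := mul_nonneg (hv₀nn i hi1 hiN) (hΔ0 i hi1 hiN).le
    have hdq : HasDerivAt (fun s => c / (x (i+1) s - x i s))
        ((0 * (x (i+1) τ - x i τ) - c * (D1 - D0)) / (x (i+1) τ - x i τ)^2) τ :=
      (hasDerivAt_const τ c).div hΔd hΔτ.ne'
    have hvd : HasDerivAt (v i)
        ((0 * (x (i+1) τ - x i τ) - c * (D1 - D0)) / (x (i+1) τ - x i τ)^2) τ := by
      refine hdq.congr_of_eventuallyEq ?_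
      filter_upwards [isOpen_Ioo.mem_nhds hτmem] with s hs
      exact hsol.mass i hi1 hiN s ⟨hs.1.le, hs.2⟩
    have hbd : HasDerivAt b ((W + ε) * (Real.exp (ε * τ) * ε)) τ := by
      have h1 : HasDerivAt (fun s : ℝ => ε * s) ε τ := by
        simpa using (hasDerivAt_id τ).const_mul ε
      exact (h1.exp).const_mul (W + ε)
    set G := ((0 * (x (i+1) τ - x i τ) - c * (D1 - D0)) / (x (i+1) τ - x i τ)^2)
      - ((W + ε) * (Real.exp (ε * τ) * ε)) with hGdef
    have hgd : HasDerivAt (fun s => v i s - b s) G τ := hvd.sub hbd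
    have hD10 : 0 ≤ D1 - D0 := by
      have h1 : aF f (v i τ) ≤ D1 := aF_le_pV hcont hnbr
      have h2 : D0 ≤ aF f (v i τ) := pV_le_aF hcont hnbl
      linarith
    have hGneg : G < 0 := by
      have h1 : (0 * (x (i+1) τ - x i τ) - c * (D1 - D0)) / (x (i+1) τ - x i τ)^2 ≤ 0 := by
        apply div_nonpos_of_nonpos_of_nonneg
        · have := mul_nonneg hcnn hD10; linarith
        · positivity
      have h2 : 0 < (W + ε) * (Real.exp (ε * τ) * ε) :=
        mul_pos (by linarith) (mul_pos (Real.exp_pos _) hε)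
      rw [hGdef]; linarith
    have hGnonneg : 0 ≤ G := by
      have hslope := hasDerivAt_iff_tendsto_slope.1 hgd
      have hmono : 𝓝[<] τ ≤ 𝓝[≠] τ :=
        nhdsWithin_mono τ (fun s hs => ne_of_lt hs)
      have hslope' := hslope.mono_left hmono
      refine ge_of_tendsto hslope' ?_
      filter_upwards [Ioo_mem_nhdsLT_of_mem (Set.right_mem_Ioc.2 hτ0 : τ ∈ Set.Ioc 0 τ)]
        with s hs
      rw [slope_def_field]
      have hgs : v i s - b s < 0 := sub_neg.2 (hpre s hs.1.le hs.2 i hi1 hiN)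
      have hgτ : v i τ - b τ = 0 := by rw [hveq]; ring
      refine div_nonneg_iff.2 (Or.inr ⟨?_, ?_⟩)
      · rw [hgτ]; linarith
      · linarith [hs.2]
    linarith
  have hub : ∀ t ∈ Set.Ioo (0:ℝ) t', ∀ i, 1 ≤ i → i < N → v i t ≤ W := by
    intro t ht j h1 h2
    have hlim : Tendsto (fun ε : ℝ => (W + ε) * Real.exp (ε * t)) (𝓝[>] 0) (𝓝 W) := by
      have hc : ContinuousAt (fun ε : ℝ => (W + ε) * Real.exp (ε * t)) 0 := by fun_prop
      have h2 := hc.tendsto.mono_left (nhdsWithin_le_nhds (s := Set.Ioi (0:ℝ)))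
      simpa using h2
    refine ge_of_tendsto hlim ?_
    filter_upwards [self_mem_nhdsWithin] with ε hε
    exact key ε hε t ht j h1 h2
  -- Part 2: growth bound on Δx
  have hAmin : aMin f N v₀ = sInf (aF f '' Set.Icc 0 W) := rfl
  have hAmax : aMax f N v₀ = sSup (aF f '' Set.Icc 0 W) := rfl
  have hvIcc : ∀ s ∈ Set.Ioo (0:ℝ) t', ∀ j, j ≤ N → v j s ∈ Set.Icc 0 W := by
    intro s hs j hj
    rcases Nat.eq_zero_or_pos j with rfl | hj1
    · rw [hsol.vzero]; exact ⟨le_refl 0, hWnn⟩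
    rcases eq_or_lt_of_le hj with rfl | hjN
    · rw [hsol.vN]; exact ⟨le_refl 0, hWnn⟩
    exact ⟨hvnn j hj1 hjN s ⟨hs.1.le, hs.2⟩, hub s hs j hj1 hjN⟩
  have key2 : ∀ t ∈ Set.Ioo (0:ℝ) t', ∀ i, 1 ≤ i → i < N →
      x (i+1) t - x i t ≤ (x₀ (i+1) - x₀ i) + t * (aMax f N v₀ - aMin f N v₀) := by
    intro t ht i h1 h2
    set A := aMax f N v₀ - aMin f N v₀ with hA
    have hderiv : ∀ s ∈ Set.Ioo (0:ℝ) t, HasDerivAt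
        (fun u => (x (i+1) u - x i u) - u * A)
        ((pV f (v i s) (v (i+1) s) - pV f (v (i-1) s) (v i s)) - A) s := by
      intro s hs
      have hsmem : s ∈ Set.Ioo (0:ℝ) t' := ⟨hs.1, lt_trans hs.2 ht.2⟩
      have hode1 : HasDerivAt (x (i+1)) (pV f (v i s) (v (i+1) s)) s := by
        simpa using hsol.ode (i+1) (by omega) (by omega) s hsmem
      have hode0 : HasDerivAt (x i) (pV f (v (i-1) s) (v i s)) s :=
        hsol.ode i h1 (by omega) s hsmem
      exact (hode1.sub hode0).sub (hasDerivAt_mul_const A)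
    have hanti : AntitoneOn (fun u => (x (i+1) u - x i u) - u * A) (Set.Icc 0 t) := by
      have hIccsub : Set.Icc (0:ℝ) t ⊆ Set.Ico 0 t' :=
        fun u hu => ⟨hu.1, lt_of_le_of_lt hu.2 ht.2⟩
      apply antitoneOn_of_deriv_nonpos (convex_Icc 0 t)
      · exact (((hsol.cont (i+1) (by omega) (by omega)).sub (hsol.cont i h1 (by omega))).mono
          hIccsub).sub (by fun_prop)
      · intro s hs
        rw [interior_Icc] at hs
        exact ((hderiv s hs).differentiableAt).differentiableWithinAt
      · intro s hs
        rw [interior_Icc] at hs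
        rw [(hderiv s hs).deriv]
        have hsmem : s ∈ Set.Ioo (0:ℝ) t' := ⟨hs.1, lt_trans hs.2 ht.2⟩
        have hm1 := pV_mem hcont (hvIcc s hsmem i (by omega)) (hvIcc s hsmem (i+1) (by omega))
        have hm0 := pV_mem hcont (hvIcc s hsmem (i-1) (by omega)) (hvIcc s hsmem i (by omega))
        simp only [Set.mem_Icc] at hm1 hm0
        rw [hA, hAmax, hAmin]
        linarith [hm1.2, hm0.1]
    have h0t : (0:ℝ) ∈ Set.Icc (0:ℝ) t := Set.left_mem_Icc.2 ht.1.le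
    have htt : t ∈ Set.Icc (0:ℝ) t := Set.right_mem_Icc.2 ht.1.le
    have hres := hanti h0t htt ht.1.le
    have hx0 : x (i+1) 0 - x i 0 = x₀ (i+1) - x₀ i := by
      rw [hsol.init (i+1) (by omega) (by omega), hsol.init i h1 (by omega)]
    simp only [zero_mul, sub_zero, hx0] at hres
    linarith
  intro t ht i h1 h2
  refine ⟨?_, hub t ht i h1 h2⟩
  by_cases hv0i : v₀ i = 0
  · rw [hv0i]
    simp only [zero_mul, zero_div]
    exact hvnn i h1 h2 t ⟨ht.1.le, ht.2⟩
  · have hvpos : 0 < v₀ i := lt_of_le_of_ne (hv₀nn i h1 h2) (Ne.symm hv0i)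
    have hΔt : 0 < x (i+1) t - x i t := hΔIco i h1 h2 t ⟨ht.1.le, ht.2⟩
    have hle2 := key2 t ht i h1 h2
    rw [hsol.mass i h1 h2 t ⟨ht.1.le, ht.2⟩]
    have hnum : 0 ≤ v₀ i * (x₀ (i+1) - x₀ i) := (mul_pos hvpos (hΔ0 i h1 h2)).le
    gcongr
end

section
/- (Diminishing total variation.) Let (x^i)_{i=1}^N, (v^i)_{i=1}^{N−1} be a solution of the particle system on (0, t'). Then for every t ∈ (0, t'): Σ_{i=0}^{N−1} |v^{i+1}_t − v^i_t| ≤ Σ_{i=0}^{N−1} |v₀^{i+1} − v₀^i| (with the conventions v⁰_t = v^N_t = 0 and v₀⁰ = v₀^N = 0); that is, the total variation of the piecewise constant approximate solution is nonincreasing in time. -/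
open MeasureTheory Set Filter
open scoped ENNReal NNReal
open scoped Topology

lemma abs_aF_le {f : ℝ → ℝ} {K : NNReal} (hf : LipschitzWith K f) (hf0 : f 0 = 0)
    (hfd : DifferentiableAt ℝ f 0) (v : ℝ) : |aF f v| ≤ K := by
  have hlip : ∀ w : ℝ, |f w| ≤ K * |w| := by
    intro w
    have := hf.dist_le_mul w 0
    simpa [Real.dist_eq, hf0] using this
  rcases eq_or_ne v 0 with rfl | hv
  · simp only [aF, if_pos rfl]
    have hd := hfd.hasDerivAt
    rw [hasDerivAt_iff_tendsto_slope] at hd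
    have hb : ∀ᶠ z in 𝓝[≠] (0:ℝ), |slope f 0 z| ≤ (K:ℝ) := by
      filter_upwards [self_mem_nhdsWithin] with z hz
      have hz' : z ≠ 0 := hz
      rw [slope_def_field]
      have : |f z - f 0| ≤ K * |z - 0| := by simpa [hf0] using hlip z
      rw [div_eq_mul_inv, abs_mul, abs_inv]
      calc |f z - f 0| * |z - 0|⁻¹ ≤ (K * |z - 0|) * |z - 0|⁻¹ := by
            apply mul_le_mul_of_nonneg_right this (by positivity)
        _ = (K:ℝ) := by field_simp
    exact le_of_tendsto hd.abs hb
  · simp only [aF, if_neg hv]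
    rw [abs_div, div_le_iff₀ (by positivity)]
    exact hlip v

lemma bddBelow_aF {f : ℝ → ℝ} {C : ℝ} (hC : ∀ w, |aF f w| ≤ C) (S : Set ℝ) :
    BddBelow (aF f '' S) :=
  ⟨-C, by rintro y ⟨w, -, rfl⟩; linarith [(abs_le.1 (hC w)).1]⟩

lemma bddAbove_aF {f : ℝ → ℝ} {C : ℝ} (hC : ∀ w, |aF f w| ≤ C) (S : Set ℝ) :
    BddAbove (aF f '' S) :=
  ⟨C, by rintro y ⟨w, -, rfl⟩; linarith [(abs_le.1 (hC w)).2]⟩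

lemma pV_le_left {f : ℝ → ℝ} {C : ℝ} (hC : ∀ w, |aF f w| ≤ C) {vl vr : ℝ} (h : vl ≤ vr) :
    pV f vl vr ≤ aF f vl := by
  rw [pV, if_pos h]
  exact csInf_le (bddBelow_aF hC _) ⟨vl, ⟨le_refl _, h⟩, rfl⟩

lemma pV_le_right {f : ℝ → ℝ} {C : ℝ} (hC : ∀ w, |aF f w| ≤ C) {vl vr : ℝ} (h : vl ≤ vr) :
    pV f vl vr ≤ aF f vr := by
  rw [pV, if_pos h]
  exact csInf_le (bddBelow_aF hC _) ⟨vr, ⟨h, le_refl _⟩, rfl⟩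

lemma left_le_pV {f : ℝ → ℝ} {C : ℝ} (hC : ∀ w, |aF f w| ≤ C) {vl vr : ℝ} (h : vr ≤ vl) :
    aF f vl ≤ pV f vl vr := by
  rw [pV]
  split_ifs with h'
  · have : vl = vr := le_antisymm h' h
    subst this
    simp [Set.Icc_self]
  · exact le_csSup (bddAbove_aF hC _) ⟨vl, ⟨h, le_refl _⟩, rfl⟩

lemma right_le_pV {f : ℝ → ℝ} {C : ℝ} (hC : ∀ w, |aF f w| ≤ C) {vl vr : ℝ} (h : vr ≤ vl) :
    aF f vr ≤ pV f vl vr := by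
  rw [pV]
  split_ifs with h'
  · have : vl = vr := le_antisymm h' h
    subst this
    simp [Set.Icc_self]
  · exact le_csSup (bddAbove_aF hC _) ⟨vr, ⟨le_refl _, h⟩, rfl⟩

lemma abel_id (σ D : ℕ → ℝ) : ∀ n : ℕ,
    ∑ i ∈ Finset.range n, σ i * (D (i+1) - D i) =
      σ (n-1) * D n - σ 0 * D 0 + ∑ j ∈ Finset.Ico 1 n, (σ (j-1) - σ j) * D j := by
  intro n
  induction n with
  | zero => simp
  | succ m ih =>
    rw [Finset.sum_range_succ, ih]
    rcases Nat.eq_zero_or_pos m with rfl | hm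
    · simp; ring
    · rw [Finset.sum_Ico_succ_top (by omega : 1 ≤ m)]
      simp only [Nat.add_sub_cancel]
      ring

lemma abel_nonpos (σ D : ℕ → ℝ) (n : ℕ) (hD0 : D 0 = 0) (hDn : D n = 0)
    (h : ∀ j, 1 ≤ j → j < n → (σ (j-1) - σ j) * D j ≤ 0) :
    ∑ i ∈ Finset.range n, σ i * (D (i+1) - D i) ≤ 0 := by
  rw [abel_id, hD0, hDn]
  simp only [mul_zero, sub_zero, zero_add]
  apply Finset.sum_nonpos
  intro j hj
  rw [Finset.mem_Ico] at hj
  exact h j hj.1 hj.2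

/-- **Diminishing total variation.** For a solution of the particle system on
`(0, t')`, the total variation `Σ_{i=0}^{N−1} |v^{i+1}_t − v^i_t|` of the piecewise constant
approximate solution is nonincreasing in time. -/
theorem diminishing_total_variation (f : ℝ → ℝ) (K : ℝ≥0) (hf : LipschitzWith K f)
    (hf0 : f 0 = 0) (hfd : DifferentiableAt ℝ f 0)
    (N : ℕ) (hN : 2 ≤ N) (x₀ v₀ : ℕ → ℝ)
    (hx₀ : ∀ i, 1 ≤ i → i < N → x₀ i < x₀ (i+1))
    (hv₀nn : ∀ i, 1 ≤ i → i < N → 0 ≤ v₀ i)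
    (hv₀0 : v₀ 0 = 0) (hv₀N : v₀ N = 0)
    (t' : ℝ) (ht' : 0 < t') (x v : ℕ → ℝ → ℝ)
    (hsol : IsParticleSol f N x₀ v₀ t' x v) :
    ∀ t ∈ Set.Ioo (0:ℝ) t',
      ∑ i ∈ Finset.range N, |v (i+1) t - v i t| ≤
        ∑ i ∈ Finset.range N, |v₀ (i+1) - v₀ i| := by
  obtain ⟨hinit, hcont, horder, hvzero, hvN, hode, hmass⟩ := hsol
  intro t₁ ht₁
  have hC : ∀ w, |aF f w| ≤ (K : ℝ) := abs_aF_le hf hf0 hfd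
  -- positivity of the gaps
  have hgap : ∀ i, 1 ≤ i → i < N → ∀ t ∈ Set.Ico (0:ℝ) t', 0 < x (i+1) t - x i t := by
    intro i h1 h2 t ht
    rcases eq_or_lt_of_le ht.1 with rfl | htpos
    · rw [hinit i h1 (le_of_lt h2), hinit (i+1) (by omega) (by omega)]
      exact sub_pos.2 (hx₀ i h1 h2)
    · exact sub_pos.2 (horder t ⟨htpos, ht.2⟩ i h1 h2)
  have hc : ∀ i, 1 ≤ i → i < N → 0 ≤ v₀ i * (x₀ (i+1) - x₀ i) := fun i h1 h2 =>
    mul_nonneg (hv₀nn i h1 h2) (sub_nonneg.2 (le_of_lt (hx₀ i h1 h2)))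
  -- nonnegativity of v
  have hvnn : ∀ i, i ≤ N → ∀ t ∈ Set.Ico (0:ℝ) t', 0 ≤ v i t := by
    intro i hiN t ht
    rcases Nat.eq_zero_or_pos i with rfl | h1
    · rw [hvzero]
    rcases eq_or_lt_of_le hiN with rfl | h2
    · rw [hvN]
    rw [hmass i h1 h2 t ht]
    exact div_nonneg (hc i h1 h2) (le_of_lt (hgap i h1 h2 t ht))
  -- the formula for the derivative of v
  set D : ℕ → ℝ → ℝ := fun j t => if 1 ≤ j ∧ j < N then
      (0 * (x (j+1) t - x j t) - v₀ j * (x₀ (j+1) - x₀ j) *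
        (pV f (v j t) (v (j+1) t) - pV f (v (j-1) t) (v j t))) / (x (j+1) t - x j t) ^ 2
    else 0 with hD_def
  have hD0 : ∀ t, D 0 t = 0 := by intro t; simp [hD_def]
  have hDN : ∀ t, D N t = 0 := by intro t; simp [hD_def]
  have hDd : ∀ j, j ≤ N → ∀ t ∈ Set.Ioo (0:ℝ) t', HasDerivAt (v j) (D j t) t := by
    intro j hjN t ht
    rcases Nat.eq_zero_or_pos j with rfl | h1
    · rw [hD0]
      exact (hasDerivAt_const t 0).congr_of_eventuallyEq
        (Filter.Eventually.of_forall hvzero)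
    rcases eq_or_lt_of_le hjN with rfl | h2
    · rw [hDN]
      exact (hasDerivAt_const t 0).congr_of_eventuallyEq
        (Filter.Eventually.of_forall hvN)
    have hgap' := hgap j h1 h2 t (Set.Ioo_subset_Ico_self ht)
    have hx1 : HasDerivAt (x (j+1)) (pV f (v j t) (v (j+1) t)) t := by
      have := hode (j+1) (by omega) (by omega) t ht
      simpa using this
    have hx0 : HasDerivAt (x j) (pV f (v (j-1) t) (v j t)) t :=
      hode j h1 (le_of_lt h2) t ht
    have hquot := (hasDerivAt_const t (v₀ j * (x₀ (j+1) - x₀ j))).div (hx1.sub hx0)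
      (ne_of_gt hgap')
    have heq : v j =ᶠ[𝓝 t] fun u => v₀ j * (x₀ (j+1) - x₀ j) / (x (j+1) u - x j u) := by
      filter_upwards [isOpen_Ioo.mem_nhds ht] with u hu
      exact hmass j h1 h2 u (Set.Ioo_subset_Ico_self hu)
    have h1' : 1 ≤ j := h1
    have hDval : D j t = (0 * (x (j+1) t - x j t) - v₀ j * (x₀ (j+1) - x₀ j) *
        (pV f (v j t) (v (j+1) t) - pV f (v (j-1) t) (v j t))) / (x (j+1) t - x j t) ^ 2 := by
      simp only [hD_def, h1', h2, and_self, if_true]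
    rw [hDval]
    exact hquot.congr_of_eventuallyEq heq
  -- sign of the derivative at local extrema
  have hsignmax : ∀ j, 1 ≤ j → j < N → ∀ t ∈ Set.Ioo (0:ℝ) t',
      v (j-1) t ≤ v j t → v (j+1) t ≤ v j t → D j t ≤ 0 := by
    intro j h1 h2 t ht hl hr
    have hA : aF f (v j t) ≤ pV f (v j t) (v (j+1) t) := left_le_pV hC hr
    have hB : pV f (v (j-1) t) (v j t) ≤ aF f (v j t) := pV_le_right hC hl
    simp only [hD_def, h1, h2, and_self, if_true]
    apply div_nonpos_of_nonpos_of_nonneg _ (sq_nonneg _)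
    have := hc j h1 h2
    nlinarith
  have hsignmin : ∀ j, 1 ≤ j → j < N → ∀ t ∈ Set.Ioo (0:ℝ) t',
      v j t ≤ v (j-1) t → v j t ≤ v (j+1) t → 0 ≤ D j t := by
    intro j h1 h2 t ht hl hr
    have hA : pV f (v j t) (v (j+1) t) ≤ aF f (v j t) := pV_le_left hC hr
    have hB : aF f (v j t) ≤ pV f (v (j-1) t) (v j t) := right_le_pV hC hl
    simp only [hD_def, h1, h2, and_self, if_true]
    apply div_nonneg _ (sq_nonneg _)
    have := hc j h1 h2
    nlinarith
  -- sign vectors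
  set σ : Finset ℕ → ℕ → ℝ := fun s i => if i ∈ s then 1 else -1 with hσ_def
  set g : ℝ → ℝ := fun t => ∑ i ∈ Finset.range N, |v (i+1) t - v i t| with hg_def
  set h : Finset ℕ → ℝ → ℝ :=
    fun s t => ∑ i ∈ Finset.range N, σ s i * (v (i+1) t - v i t) with hh_def
  have hhg : ∀ s t, h s t ≤ g t := by
    intro s t
    apply Finset.sum_le_sum
    intro i _
    rw [hσ_def]
    dsimp only
    split_ifs
    · rw [one_mul]; exact le_abs_self _
    · rw [neg_one_mul]; exact neg_le_abs _
  have hex : ∀ t, ∃ s ∈ (Finset.range N).powerset,  h s t = g t := by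
    intro t
    refine ⟨(Finset.range N).filter (fun i => 0 ≤ v (i+1) t - v i t),
      Finset.mem_powerset.2 (Finset.filter_subset _ _), ?_⟩
    apply Finset.sum_congr rfl
    intro i hi
    rw [hσ_def]
    dsimp only
    split_ifs with hmem
    · rw [one_mul, abs_of_nonneg (Finset.mem_filter.1 hmem).2]
    · have : ¬ (0 ≤ v (i+1) t - v i t) := fun hcon => hmem (Finset.mem_filter.2 ⟨hi, hcon⟩)
      rw [neg_one_mul, abs_of_neg (lt_of_not_ge this)]
  -- continuity of v and g on [0, t')
  have hvcont : ∀ j, j ≤ N → ContinuousOn (v j) (Set.Ico 0 t') := by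
    intro j hjN
    rcases Nat.eq_zero_or_pos j with rfl | h1
    · exact (continuousOn_const (c := (0:ℝ))).congr (fun u _ => hvzero u)
    rcases eq_or_lt_of_le hjN with rfl | h2
    · exact (continuousOn_const (c := (0:ℝ))).congr (fun u _ => hvN u)
    refine ContinuousOn.congr (f := fun u => v₀ j * (x₀ (j+1) - x₀ j) / (x (j+1) u - x j u))
      ?_ (fun u hu => hmass j h1 h2 u hu)
    exact continuousOn_const.div ((hcont (j+1) (by omega) (by omega)).sub
      (hcont j h1 (le_of_lt h2))) (fun u hu => ne_of_gt (hgap j h1 h2 u hu))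
  have hgcont : ContinuousOn g (Set.Ico 0 t') := by
    apply continuousOn_finset_sum
    intro i hi
    rw [Finset.mem_range] at hi
    exact ((hvcont (i+1) (by omega)).sub (hvcont i (by omega))).abs
  -- derivative of h s
  have hhderiv : ∀ s, ∀ t ∈ Set.Ioo (0:ℝ) t',
      HasDerivAt (h s) (∑ i ∈ Finset.range N, σ s i * (D (i+1) t - D i t)) t := by
    intro s t ht
    rw [hh_def]
    apply HasDerivAt.fun_sum
    intro i hi
    rw [Finset.mem_range] at hi
    exact ((hDd (i+1) (by omega) t ht).sub (hDd i (by omega) t ht)).const_mul _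
  -- the key inequality
  have hkey : ∀ s, ∀ t ∈ Set.Ioo (0:ℝ) t', h s t = g t →
      ∑ i ∈ Finset.range N, σ s i * (D (i+1) t - D i t) ≤ 0 := by
    intro s t ht hst
    have hterm : ∀ i ∈ Finset.range N,
        σ s i * (v (i+1) t - v i t) = |v (i+1) t - v i t| := by
      apply (Finset.sum_eq_sum_iff_of_le ?_).1
      · rw [← hh_def, ← hg_def] at *
        exact hst
      · intro i _
        rw [hσ_def]; dsimp only
        split_ifs
        · rw [one_mul]; exact le_abs_self _
        · rw [neg_one_mul]; exact neg_le_abs _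
    apply abel_nonpos (σ s) (fun j => D j t) N (hD0 t) (hDN t)
    intro j hj1 hjN
    have hjm : j - 1 + 1 = j := by omega
    have hd1 := hterm (j-1) (Finset.mem_range.2 (by omega))
    rw [hjm] at hd1
    have hd2 := hterm j (Finset.mem_range.2 hjN)
    rw [hσ_def] at hd1 hd2
    dsimp only at hd1 hd2
    by_cases hm1 : j - 1 ∈ s <;> by_cases hm2 : j ∈ s <;>
      simp only [hσ_def, hm1, hm2, if_pos, if_neg, if_true, if_false]
    · simp
    · -- local max : σ (j-1) = 1, σ j = -1
      rw [if_pos hm1] at hd1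
      rw [if_neg hm2] at hd2
      have hl : v (j-1) t ≤ v j t := by
        rw [one_mul] at hd1; have := abs_nonneg (v j t - v (j-1) t); linarith
      have hr : v (j+1) t ≤ v j t := by
        rw [neg_one_mul] at hd2; have := abs_nonneg (v (j+1) t - v j t); linarith
      have := hsignmax j hj1 hjN t ht hl hr
      linarith
    · -- local min
      rw [if_neg hm1] at hd1
      rw [if_pos hm2] at hd2
      have hl : v j t ≤ v (j-1) t := by
        rw [neg_one_mul] at hd1; have := abs_nonneg (v j t - v (j-1) t); linarith
      have hr : v j t ≤ v (j+1) t := by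
        rw [one_mul] at hd2; have := abs_nonneg (v (j+1) t - v j t); linarith
      have := hsignmin j hj1 hjN t ht hl hr
      linarith
    · simp
  -- Gronwall on [s₀, t₁]
  have hmain : ∀ s₀ ∈ Set.Ioc (0:ℝ) t₁, g t₁ ≤ g s₀ := by
    intro s₀ hs₀
    have hsub : Set.Icc s₀ t₁ ⊆ Set.Ico 0 t' :=
      fun u hu => ⟨le_trans (le_of_lt hs₀.1) hu.1, lt_of_le_of_lt hu.2 ht₁.2⟩
    have hslopes : ∀ u ∈ Set.Ico s₀ t₁, ∀ r : ℝ, (fun _ : ℝ => (0:ℝ)) u < r →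
        ∃ᶠ z in 𝓝[>] u, (z - u)⁻¹ * (g z - g u) < r := by
      intro u hu r hr
      have hu' : u ∈ Set.Ioo (0:ℝ) t' :=
        ⟨lt_of_lt_of_le hs₀.1 hu.1, lt_trans hu.2 ht₁.2⟩
      -- pigeonhole: some sign vector achieves the max frequently to the right of u
      have hfreq : ∃ s ∈ (Finset.range N).powerset, ∃ᶠ z in 𝓝[>] u, h s z = g z := by
        by_contra hcon
        push_neg at hcon
        have hall : ∀ᶠ z in 𝓝[>] u, ∀ s ∈ (Finset.range N).powerset, ¬ (h s z = g z) := by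
          rw [Filter.eventually_all_finset]
          intro s hs
          exact hcon s hs
        obtain ⟨z, hz⟩ := hall.exists
        obtain ⟨s, hs, hsz⟩ := hex z
        exact hz s hs hsz
      obtain ⟨s, -, hfreq⟩ := hfreq
      have hder := hhderiv s u hu'
      -- h s u = g u
      have hgu : h s u = g u := by
        have hgc : ContinuousAt g u := by
          apply (hgcont.mono Set.Ioo_subset_Ico_self).continuousAt
          exact isOpen_Ioo.mem_nhds hu'
        have hhc : ContinuousAt (h s) u := hder.continuousAt
        have htend : Filter.Tendsto (fun z => g z - h s z) (𝓝[>] u)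
            (𝓝 (g u - h s u)) := ((hgc.sub hhc).tendsto).mono_left nhdsWithin_le_nhds
        have hmem : g u - h s u ∈ ({0} : Set ℝ) :=
          isClosed_singleton.mem_of_frequently_of_tendsto
            (hfreq.mono fun z hz => by simp [hz]) htend
        have := Set.mem_singleton_iff.1 hmem
        linarith
      have hds := hkey s u hu' hgu
      -- slope of h s tends to a nonpositive limit
      have hslope : Filter.Tendsto (slope (h s) u) (𝓝[>] u)
          (𝓝 (∑ i ∈ Finset.range N, σ s i * (D (i+1) u - D i u))) :=
        (hasDerivAt_iff_tendsto_slope.mp hder).mono_left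
          (nhdsWithin_mono u fun z hz => ne_of_gt hz)
      have hev : ∀ᶠ z in 𝓝[>] u, slope (h s) u z < r :=
        hslope.eventually_lt_const (lt_of_le_of_lt hds hr)
      refine (hfreq.and_eventually hev).mono ?_
      rintro z ⟨h1, h2⟩
      have : (z - u)⁻¹ * (g z - g u) = slope (h s) u z := by
        rw [slope_def_field, h1, hgu, div_eq_inv_mul]
      rwa [this]
    have H := le_gronwallBound_of_liminf_deriv_right_le (f := g) (f' := fun _ => 0)
      (δ := g s₀) (K := 0) (ε := 0) (a := s₀) (b := t₁)
      (hgcont.mono hsub) hslopes le_rfl (fun u _ => by simp) t₁ ⟨hs₀.2, le_refl _⟩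
    simpa [gronwallBound_K0] using H
  -- pass to the limit s₀ → 0⁺
  have hg0 : g t₁ ≤ g 0 := by
    have hne : (𝓝[Set.Ioc 0 t₁] (0:ℝ)).NeBot := by
      rw [← mem_closure_iff_nhdsWithin_neBot, closure_Ioc ht₁.1.ne]
      exact ⟨le_refl _, le_of_lt ht₁.1⟩
    have hsub : Set.Ioc (0:ℝ) t₁ ⊆ Set.Ico 0 t' :=
      fun z hz => ⟨le_of_lt hz.1, lt_of_le_of_lt hz.2 ht₁.2⟩
    have htend : Filter.Tendsto g (𝓝[Set.Ioc 0 t₁] 0) (𝓝 (g 0)) :=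
      (hgcont 0 ⟨le_refl _, ht'⟩).mono_left (nhdsWithin_mono _ hsub)
    refine ge_of_tendsto htend ?_
    filter_upwards [self_mem_nhdsWithin] with s₀ hs₀
    exact hmain s₀ hs₀
  -- identify g 0 with the initial total variation
  have hv00 : ∀ j, j ≤ N → v j 0 = v₀ j := by
    intro j hjN
    rcases Nat.eq_zero_or_pos j with rfl | h1
    · rw [hvzero, hv₀0]
    rcases eq_or_lt_of_le hjN with rfl | h2
    · rw [hvN, hv₀N]
    have h1' : 1 ≤ j := h1
    rw [hmass j h1' h2 0 ⟨le_refl _, ht'⟩, hinit j h1' (le_of_lt h2),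
      hinit (j+1) (by omega) (by omega), mul_div_assoc,
      div_self (sub_ne_zero.2 (hx₀ j h1' h2).ne'), mul_one]
  have hgval : g 0 = ∑ i ∈ Finset.range N, |v₀ (i+1) - v₀ i| := by
    rw [hg_def]
    apply Finset.sum_congr rfl
    intro i hi
    rw [Finset.mem_range] at hi
    rw [hv00 (i+1) (by omega), hv00 i (by omega)]
  calc ∑ i ∈ Finset.range N, |v (i+1) t₁ - v i t₁| = g t₁ := rfl
    _ ≤ g 0 := hg0
    _ = _ := hgval
end
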